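/- Let t ∈ (−1,1) be real and let p_1,…,p_d ∈ [0,1] with ∑_i p_i = 1. Then ∑_{i=1}^{d} p_i · |exp(−i p_i t) − (cos t − i p_i sin t)| ≤ 2t², where |·| is the modulus of a complex number and exp is the complex exponential. -/

import Mathlib

open Complex

lemma sin_dev {x : ℝ} (hx : |x| ≤ 1) : |Real.sin x - x| ≤ x ^ 2 / 4 := by
  have h := Real.sin_bound hx
  have hx2 : x ^ 2 ≤ 1 := by nlinarith [_root_.sq_abs x, abs_nonneg x]
  have h3 : |x| ^ 3 ≤ x ^ 2 := by
    have : |x| ^ 3 = |x| * |x| ^ 2 := by ring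
    rw [this, _root_.sq_abs]
    nlinarith [sq_nonneg x, abs_nonneg x]
  have h4 : |x| ^ 4 ≤ x ^ 2 := by
    have : |x| ^ 4 = (x ^ 2) ^ 2 := by rw [show (4:ℕ) = 2*2 from rfl, pow_mul, _root_.sq_abs]
    rw [this]
    nlinarith [sq_nonneg x]
  calc |Real.sin x - x| = |(Real.sin x - (x - x ^ 3 / 6)) + (-(x ^ 3 / 6))| := by ring_nf
    _ ≤ |Real.sin x - (x - x ^ 3 / 6)| + |x ^ 3 / 6| := by
        refine (abs_add_le _ _).trans ?_
        rw [abs_neg]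
    _ ≤ |x| ^ 4 * (5 / 96) + |x| ^ 3 / 6 := by
        rw [abs_div, _root_.abs_pow]
        gcongr
        · have h5 : |x| ^ 5 ≤ |x| ^ 4 := by
            calc |x| ^ 5 = |x| ^ 4 * |x| := by ring
              _ ≤ |x| ^ 4 * 1 := mul_le_mul_of_nonneg_left hx (by positivity)
              _ = |x| ^ 4 := by ring
          linarith [pow_nonneg (abs_nonneg x) 4]
        · norm_num
    _ ≤ x ^ 2 * (5 / 96) + x ^ 2 / 6 := by gcongr
    _ ≤ x ^ 2 / 4 := by nlinarith [sq_nonneg x]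

/-- eigenvalue-wise bound
`∑ᵢ pᵢ |e^{−i pᵢ t} − (cos t − i pᵢ sin t)| ≤ 2t²`. -/
theorem stmt_9 (d : ℕ) (t : ℝ) (ht : t ∈ Set.Ioo (-1 : ℝ) 1)
    (p : Fin d → ℝ) (hp : ∀ i, p i ∈ Set.Icc (0 : ℝ) 1) (hsum : ∑ i, p i = 1) :
    ∑ i, p i * ‖Complex.exp (-(Complex.I * (p i) * t)) -
        ((Real.cos t : ℂ) - Complex.I * (p i) * (Real.sin t : ℂ))‖
      ≤ 2 * t ^ 2 := by
  obtain ⟨ht1, ht2⟩ := ht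
  have habs_t : |t| ≤ 1 := abs_le.2 ⟨ht1.le, ht2.le⟩
  have key : ∀ i, ‖Complex.exp (-(Complex.I * (p i) * t)) -
      ((Real.cos t : ℂ) - Complex.I * (p i) * (Real.sin t : ℂ))‖ ≤ 2 * t ^ 2 := by
    intro i
    obtain ⟨hp0, hp1⟩ := hp i
    set q := p i with hq
    have hq2 : q ^ 2 ≤ 1 := by nlinarith
    have hqt : (q * t) ^ 2 ≤ t ^ 2 := by nlinarith [sq_nonneg t]
    have habs_qt : |q * t| ≤ 1 := by
      rw [abs_mul, _root_.abs_of_nonneg hp0]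
      calc q * |t| ≤ 1 * 1 :=
            mul_le_mul hp1 habs_t (abs_nonneg t) zero_le_one
        _ = 1 := by ring
    have hexp : Complex.exp (-(Complex.I * q * t)) =
        (Real.cos (q * t) : ℂ) - Complex.I * (Real.sin (q * t) : ℂ) := by
      have h1 : (-(Complex.I * q * t) : ℂ) = ((-(q * t) : ℝ) : ℂ) * Complex.I := by
        push_cast; ring
      rw [h1, Complex.exp_mul_I, Complex.ofReal_cos, Complex.ofReal_sin]
      push_cast
      rw [Complex.cos_neg, Complex.sin_neg]
      ring
    rw [hexp]
    have hz : (Real.cos (q * t) : ℂ) - Complex.I * (Real.sin (q * t) : ℂ) -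
        ((Real.cos t : ℂ) - Complex.I * q * (Real.sin t : ℂ)) =
        Complex.mk (Real.cos (q * t) - Real.cos t) (q * Real.sin t - Real.sin (q * t)) := by
      simp [Complex.ext_iff, -Complex.ofReal_cos, -Complex.ofReal_sin]
      ring
    rw [hz]
    have habs_le : ‖Complex.mk (Real.cos (q * t) - Real.cos t)
        (q * Real.sin t - Real.sin (q * t))‖ ≤
        |Real.cos (q * t) - Real.cos t| + |q * Real.sin t - Real.sin (q * t)| := by
      simpa using Complex.norm_le_abs_re_add_abs_im
        (Complex.mk (Real.cos (q * t) - Real.cos t) (q * Real.sin t - Real.sin (q * t)))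
    refine habs_le.trans ?_
    have hcos : |Real.cos (q * t) - Real.cos t| ≤ t ^ 2 / 2 := by
      have h1 : 1 - (q * t) ^ 2 / 2 ≤ Real.cos (q * t) := Real.one_sub_sq_div_two_le_cos
      have h2 : 1 - t ^ 2 / 2 ≤ Real.cos t := Real.one_sub_sq_div_two_le_cos
      have h3 : Real.cos (q * t) ≤ 1 := Real.cos_le_one _
      have h4 : Real.cos t ≤ 1 := Real.cos_le_one _
      rw [abs_le]
      constructor <;> nlinarith
    have hsin : |q * Real.sin t - Real.sin (q * t)| ≤ t ^ 2 / 2 := by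
      have h1 := sin_dev habs_qt
      have h2 := sin_dev habs_t
      calc |q * Real.sin t - Real.sin (q * t)|
          = |(q * (Real.sin t - t)) + ((q * t) - Real.sin (q * t))| := by ring_nf
        _ ≤ |q * (Real.sin t - t)| + |(q * t) - Real.sin (q * t)| := abs_add_le _ _
        _ = q * |Real.sin t - t| + |Real.sin (q * t) - q * t| := by
            rw [abs_mul, _root_.abs_of_nonneg hp0, abs_sub_comm (q * t)]
        _ ≤ 1 * (t ^ 2 / 4) + (q * t) ^ 2 / 4 := by
            gcongr
        _ ≤ t ^ 2 / 2 := by nlinarith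
    nlinarith [sq_nonneg t]
  calc ∑ i, p i * ‖Complex.exp (-(Complex.I * (p i) * t)) -
        ((Real.cos t : ℂ) - Complex.I * (p i) * (Real.sin t : ℂ))‖
      ≤ ∑ i, p i * (2 * t ^ 2) := by
        apply Finset.sum_le_sum
        intro i _
        exact mul_le_mul_of_nonneg_left (key i) (hp i).1
    _ = 2 * t ^ 2 := by rw [← Finset.sum_mul, hsum, one_mul]
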